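/- The function g(x) = x·e^{−x²} − 2√π·(Φ(2x√2) − Φ(x√2)), where Φ is the standard normal CDF, has a unique positive root λ, and λ ≈ 0.789004 (in particular λ ∈ (0.78, 0.80)). -/

import Mathlib

open Real

/-- The cumulative distribution function of the standard normal distribution. -/
noncomputable def stdNormalCDF (s : ℝ) : ℝ :=
  (1 / Real.sqrt (2 * π)) * ∫ x in Set.Iic s, Real.exp (-x ^ 2 / 2)

/-- g(x) = x·e^{−x²} − 2√π·(Φ(2x√2) − Φ(x√2)). -/
noncomputable def thresholdFun (x : ℝ) : ℝ :=
  x * Real.exp (-x ^ 2) -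
    2 * Real.sqrt π *
      (stdNormalCDF (2 * x * Real.sqrt 2) - stdNormalCDF (x * Real.sqrt 2))

open MeasureTheory intervalIntegral

namespace ThreshAux



lemma exp_lb4 {x l : ℝ} (h0 : 0 ≤ x) (hl : 0 ≤ l)
    (hl2 : l ≤ 1 + x + x^2/2 + x^3/6 + x^4/24 + x^5/120 + x^6/720) :
    l^4 ≤ Real.exp (4*x) := by
  have h := Real.sum_le_exp_of_nonneg h0 7
  have hs : (∑ i ∈ Finset.range 7, x ^ i / i.factorial)
      = 1 + x + x^2/2 + x^3/6 + x^4/24 + x^5/120 + x^6/720 := by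
    simp [Finset.sum_range_succ, Nat.factorial]
  rw [hs] at h
  have : Real.exp (4*x) = Real.exp x ^ 4 := by
    rw [← Real.exp_nat_mul]; norm_num
  rw [this]
  exact pow_le_pow_left₀ hl (hl2.trans h) 4

lemma exp_ub4 {x u : ℝ} (h0 : 0 ≤ x) (h1 : x ≤ 1)
    (hu : 1 + x + x^2/2 + x^3/6 + x^4/24 + x^5/120 + x^6/720 + x^7*(8/35280) ≤ u) :
    Real.exp (4*x) ≤ u^4 := by
  have h := Real.exp_bound' h0 h1 (n := 7) (by norm_num)
  have hs : (∑ i ∈ Finset.range 7, x ^ i / i.factorial)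
      = 1 + x + x^2/2 + x^3/6 + x^4/24 + x^5/120 + x^6/720 := by
    simp [Finset.sum_range_succ, Nat.factorial]
  rw [hs] at h
  have h2 : Real.exp x ≤ u := by
    refine h.trans (le_trans (le_of_eq ?_) hu)
    have h7 : ((7:ℕ).factorial : ℝ) = 5040 := by norm_num [Nat.factorial]
    rw [h7]; norm_num; ring
  have : Real.exp (4*x) = Real.exp x ^ 4 := by
    rw [← Real.exp_nat_mul]; norm_num
  rw [this]
  exact pow_le_pow_left₀ (Real.exp_pos x).le h2 4

lemma exp_neg_ub {x l u : ℝ} (h0 : 0 ≤ x) (hl : 0 < l)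
    (hl2 : l ≤ 1 + x + x^2/2 + x^3/6 + x^4/24 + x^5/120 + x^6/720)
    (hu : (l^4)⁻¹ ≤ u) : Real.exp (-(4*x)) ≤ u := by
  rw [Real.exp_neg]
  exact le_trans (inv_anti₀ (by positivity) (exp_lb4 h0 hl.le hl2)) hu

lemma exp_neg_lb {x u l' : ℝ} (h0 : 0 ≤ x) (h1 : x ≤ 1)
    (hu : 1 + x + x^2/2 + x^3/6 + x^4/24 + x^5/120 + x^6/720 + x^7*(8/35280) ≤ u)
    (hl : l' ≤ (u^4)⁻¹) : l' ≤ Real.exp (-(4*x)) := by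
  rw [Real.exp_neg]
  exact hl.trans (inv_anti₀ (Real.exp_pos _) (exp_ub4 h0 h1 hu))

lemma E081 : Real.exp (-(0.81:ℝ)) ≤ 0.4448581 := by
  rw [show (-(0.81:ℝ)) = -(4*0.2025) by norm_num]
  exact exp_neg_ub (l := 1.22446008) (by norm_num) (by norm_num) (by norm_num) (by norm_num)

lemma E121 : Real.exp (-(1.21:ℝ)) ≤ 0.2981974 := by
  rw [show (-(1.21:ℝ)) = -(4*0.3025) by norm_num]
  exact exp_neg_ub (l := 1.35323762) (by norm_num) (by norm_num) (by norm_num) (by norm_num)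

lemma E169 : Real.exp (-(1.69:ℝ)) ≤ 0.1845198 := by
  rw [show (-(1.69:ℝ)) = -(4*0.4225) by norm_num]
  exact exp_neg_ub (l := 1.52577071) (by norm_num) (by norm_num) (by norm_num) (by norm_num)

lemma E225 : Real.exp (-(2.25:ℝ)) ≤ 0.1054002 := by
  rw [show (-(2.25:ℝ)) = -(4*0.5625) by norm_num]
  exact exp_neg_ub (l := 1.75505085) (by norm_num) (by norm_num) (by norm_num) (by norm_num)

lemma E6084 : Real.exp (-(0.6084:ℝ)) ≤ 0.5442211 := by
  rw [show (-(0.6084:ℝ)) = -(4*0.1521) by norm_num]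
  exact exp_neg_ub (l := 1.16427665) (by norm_num) (by norm_num) (by norm_num) (by norm_num)

lemma F77 : (0.4630101:ℝ) ≤ Real.exp (-(0.77000625:ℝ)) := by
  rw [show (-(0.77000625:ℝ)) = -(4*0.1925015625) by norm_num]
  exact exp_neg_lb (u := 1.2122784) (by norm_num) (by norm_num) (by norm_num) (by norm_num)

lemma F115 : (0.3165556:ℝ) ≤ Real.exp (-(1.15025625:ℝ)) := by
  rw [show (-(1.15025625:ℝ)) = -(4*0.2875640625) by norm_num]
  exact exp_neg_lb (u := 1.333176) (by norm_num) (by norm_num) (by norm_num) (by norm_num)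

lemma F160 : (0.2005771:ℝ) ≤ Real.exp (-(1.60655625:ℝ)) := by
  rw [show (-(1.60655625:ℝ)) = -(4*0.4016390625) by norm_num]
  exact exp_neg_lb (u := 1.49427193) (by norm_num) (by norm_num) (by norm_num) (by norm_num)

lemma F213 : (0.1177835:ℝ) ≤ Real.exp (-(2.13890625:ℝ)) := by
  rw [show (-(2.13890625:ℝ)) = -(4*0.5347265625) by norm_num]
  exact exp_neg_lb (u := 1.70698161) (by norm_num) (by norm_num) (by norm_num) (by norm_num)

lemma F064 : (0.5272923:ℝ) ≤ Real.exp (-(0.64:ℝ)) := by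
  rw [show (-(0.64:ℝ)) = -(4*0.16) by norm_num]
  exact exp_neg_lb (u := 1.17351088) (by norm_num) (by norm_num) (by norm_num) (by norm_num)

lemma F027 : (0.75:ℝ) ≤ Real.exp (-(0.27:ℝ)) := by
  rw [show (-(0.27:ℝ)) = -(4*0.0675) by norm_num]
  exact exp_neg_lb (u := 1.06983026) (by norm_num) (by norm_num) (by norm_num) (by norm_num)

lemma E17787 : Real.exp (1.7787:ℝ) ≤ 5.9221535 := by
  rw [show (1.7787:ℝ) = 4*0.444675 by norm_num]
  refine le_trans (exp_ub4 (u := 1.5599831765) (by norm_num) (by norm_num) (by norm_num)) ?_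
  norm_num

lemma E192 : (4:ℝ) < Real.exp (1.92:ℝ) := by
  rw [show (1.92:ℝ) = 4*0.48 by norm_num]
  refine lt_of_lt_of_le ?_ (exp_lb4 (l := 1.61607316) (by norm_num) (by norm_num) (by norm_num))
  norm_num
lemma contf : Continuous fun u : ℝ => Real.exp (-u^2) := by fun_prop

lemma intf (a b : ℝ) : IntervalIntegrable (fun u : ℝ => Real.exp (-u^2)) MeasureTheory.volume a b :=
  contf.intervalIntegrable a b

lemma piece_lb (a b m L : ℝ) (hab : a ≤ b) (hL : L ≤ Real.exp (-m^2))
    (hP : 0 ≤ (1+m^2)*(b-a) - (b^3-a^3)/3) :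
    L * ((1+m^2)*(b-a) - (b^3-a^3)/3) ≤ ∫ u in a..b, Real.exp (-u^2) := by
  have key : ∀ u ∈ Set.Icc a b, Real.exp (-m^2) * (1 + m^2 - u^2) ≤ Real.exp (-u^2) := by
    intro u _
    have h1 : 1 + (m^2 - u^2) ≤ Real.exp (m^2 - u^2) := by
      linarith [Real.add_one_le_exp (m^2 - u^2)]
    calc Real.exp (-m^2) * (1 + m^2 - u^2) = Real.exp (-m^2) * (1 + (m^2 - u^2)) := by ring
    _ ≤ Real.exp (-m^2) * Real.exp (m^2 - u^2) :=
        mul_le_mul_of_nonneg_left h1 (Real.exp_pos _).le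
    _ = Real.exp (-u^2) := by rw [← Real.exp_add]; ring_nf
  have hint2 : IntervalIntegrable (fun u : ℝ => Real.exp (-m^2) * (1 + m^2 - u^2))
      MeasureTheory.volume a b := by
    apply Continuous.intervalIntegrable; fun_prop
  have h2 := intervalIntegral.integral_mono_on hab hint2 (intf a b) key
  have h3 : (∫ u in a..b, Real.exp (-m^2) * (1 + m^2 - u^2))
      = Real.exp (-m^2) * ((1+m^2)*(b-a) - (b^3-a^3)/3) := by
    rw [intervalIntegral.integral_const_mul]
    congr 1
    rw [intervalIntegral.integral_sub (continuous_const.intervalIntegrable a b)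
      ((continuous_pow 2).intervalIntegrable a b)]
    simp [integral_pow]
    ring
  calc L * ((1+m^2)*(b-a) - (b^3-a^3)/3)
      ≤ Real.exp (-m^2) * ((1+m^2)*(b-a) - (b^3-a^3)/3) := mul_le_mul_of_nonneg_right hL hP
    _ = ∫ u in a..b, Real.exp (-m^2) * (1 + m^2 - u^2) := h3.symm
    _ ≤ ∫ u in a..b, Real.exp (-u^2) := h2

lemma piece_ub (a b m U : ℝ) (h0a : 0 ≤ a) (hab : a ≤ b) (hb1 : b^2 - m^2 ≤ 1)
    (ha1 : m^2 - a^2 ≤ 1) (hU : Real.exp (-m^2) ≤ U)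
    (hQ : 0 ≤ (1+m^2+(3/4)*m^4)*(b-a) - (1+(3/2)*m^2)*(b^3-a^3)/3 + (3/20)*(b^5-a^5)) :
    (∫ u in a..b, Real.exp (-u^2)) ≤
      U * ((1+m^2+(3/4)*m^4)*(b-a) - (1+(3/2)*m^2)*(b^3-a^3)/3 + (3/20)*(b^5-a^5)) := by
  have key : ∀ u ∈ Set.Icc a b,
      Real.exp (-u^2) ≤ Real.exp (-m^2) * (1 + (m^2-u^2) + (3/4)*(m^2-u^2)^2) := by
    intro u hu
    have hu0 : 0 ≤ u := h0a.trans hu.1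
    have hua : a^2 ≤ u^2 := pow_le_pow_left₀ h0a hu.1 2
    have hub : u^2 ≤ b^2 := pow_le_pow_left₀ hu0 hu.2 2
    have habs : |m^2 - u^2| ≤ 1 := abs_le.mpr ⟨by nlinarith, by nlinarith⟩
    have hexp := Real.exp_bound habs (n := 2) (by norm_num)
    have hsum : (∑ i ∈ Finset.range 2, (m^2-u^2) ^ i / i.factorial) = 1 + (m^2-u^2) := by
      simp [Finset.sum_range_succ]
    rw [hsum] at hexp
    have h4 : Real.exp (m^2-u^2) ≤ 1 + (m^2-u^2) + (3/4)*(m^2-u^2)^2 := by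
      have := (abs_sub_le_iff.mp hexp).1
      have hsq : |m^2-u^2| ^ 2 = (m^2-u^2)^2 := sq_abs _
      rw [hsq] at this
      norm_num [Nat.factorial] at this ⊢
      linarith
    calc Real.exp (-u^2) = Real.exp (-m^2) * Real.exp (m^2-u^2) := by
          rw [← Real.exp_add]; ring_nf
      _ ≤ Real.exp (-m^2) * (1 + (m^2-u^2) + (3/4)*(m^2-u^2)^2) :=
          mul_le_mul_of_nonneg_left h4 (Real.exp_pos _).le
  have hint2 : IntervalIntegrable
      (fun u : ℝ => Real.exp (-m^2) * (1 + (m^2-u^2) + (3/4)*(m^2-u^2)^2))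
      MeasureTheory.volume a b := by
    apply Continuous.intervalIntegrable; fun_prop
  have h2 := intervalIntegral.integral_mono_on hab (intf a b) hint2 key
  have h3 : (∫ u in a..b, Real.exp (-m^2) * (1 + (m^2-u^2) + (3/4)*(m^2-u^2)^2))
      = Real.exp (-m^2) *
        ((1+m^2+(3/4)*m^4)*(b-a) - (1+(3/2)*m^2)*(b^3-a^3)/3 + (3/20)*(b^5-a^5)) := by
    have heq : (fun u : ℝ => Real.exp (-m^2) * (1 + (m^2-u^2) + (3/4)*(m^2-u^2)^2))
        = fun u : ℝ => Real.exp (-m^2) *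
            ((1+m^2+(3/4)*m^4) - (1+(3/2)*m^2)*u^2 + (3/4)*u^4) := by
      funext u; ring
    rw [heq]
    rw [intervalIntegral.integral_const_mul]
    congr 1
    have i1 : IntervalIntegrable (fun u : ℝ => (1+m^2+(3/4)*m^4) - (1+(3/2)*m^2)*u^2)
        MeasureTheory.volume a b := by apply Continuous.intervalIntegrable; fun_prop
    have i2 : IntervalIntegrable (fun u : ℝ => (3/4)*u^4) MeasureTheory.volume a b := by
      apply Continuous.intervalIntegrable; fun_prop
    rw [intervalIntegral.integral_add i1 i2,
      intervalIntegral.integral_sub (continuous_const.intervalIntegrable a b)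
        (by apply Continuous.intervalIntegrable; fun_prop),
      intervalIntegral.integral_const_mul, intervalIntegral.integral_const_mul]
    simp [integral_pow]
    ring
  calc (∫ u in a..b, Real.exp (-u^2))
      ≤ ∫ u in a..b, Real.exp (-m^2) * (1 + (m^2-u^2) + (3/4)*(m^2-u^2)^2) := h2
    _ = Real.exp (-m^2) *
        ((1+m^2+(3/4)*m^4)*(b-a) - (1+(3/2)*m^2)*(b^3-a^3)/3 + (3/20)*(b^5-a^5)) := h3
    _ ≤ U * ((1+m^2+(3/4)*m^4)*(b-a) - (1+(3/2)*m^2)*(b^3-a^3)/3 + (3/20)*(b^5-a^5)) :=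
        mul_le_mul_of_nonneg_right hU hQ
lemma gauss_int (s : ℝ) :
    MeasureTheory.IntegrableOn (fun t : ℝ => Real.exp (-t^2/2)) (Set.Iic s) := by
  have h : (fun t : ℝ => Real.exp (-t^2/2)) = fun t : ℝ => Real.exp (-(1/2) * t^2) := by
    funext t; ring_nf
  rw [h]
  exact (integrable_exp_neg_mul_sq (by norm_num)).integrableOn

lemma cdf_sub (aa bb : ℝ) : stdNormalCDF bb - stdNormalCDF aa
    = (1 / Real.sqrt (2*π)) * ∫ t in aa..bb, Real.exp (-t^2/2) := by
  unfold stdNormalCDF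
  rw [← mul_sub]
  congr 1
  exact intervalIntegral.integral_Iic_sub_Iic (gauss_int aa) (gauss_int bb)

lemma threshold_eq (x : ℝ) : thresholdFun x
    = x * Real.exp (-x^2) - 2 * ∫ u in x..(2*x), Real.exp (-u^2) := by
  have hsub : (∫ t in (x*Real.sqrt 2)..(2*x*Real.sqrt 2), Real.exp (-t^2/2))
      = Real.sqrt 2 * ∫ u in x..(2*x), Real.exp (-u^2) := by
    have h2 : (Real.sqrt 2) ≠ 0 := by positivity
    have hc := intervalIntegral.integral_comp_mul_right (a := x) (b := 2*x)
      (fun t => Real.exp (-t^2/2)) h2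
    have heq : (fun u : ℝ => Real.exp (-(u*Real.sqrt 2)^2/2)) = fun u : ℝ => Real.exp (-u^2) := by
      funext u
      rw [mul_pow, Real.sq_sqrt (by norm_num : (0:ℝ) ≤ 2)]
      ring_nf
    simp only [heq] at hc
    rw [hc, smul_eq_mul, ← mul_assoc, mul_inv_cancel₀ h2, one_mul]
  unfold thresholdFun
  rw [cdf_sub, hsub]
  have hπ : (0:ℝ) < Real.sqrt π := Real.sqrt_pos.mpr Real.pi_pos
  have h2 : (0:ℝ) < Real.sqrt 2 := by positivity
  rw [Real.sqrt_mul (by norm_num : (0:ℝ) ≤ 2) π]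
  field_simp

noncomputable def Ei (x : ℝ) : ℝ := ∫ u in (0:ℝ)..x, Real.exp (-u^2)

lemma hasDerivAt_Ei (x : ℝ) : HasDerivAt Ei (Real.exp (-x^2)) x :=
  intervalIntegral.integral_hasDerivAt_right (intf 0 x)
    (contf.stronglyMeasurable.stronglyMeasurableAtFilter)
    contf.continuousAt

lemma Ei_diff (x : ℝ) : Ei (2*x) - Ei x = ∫ u in x..(2*x), Real.exp (-u^2) :=
  intervalIntegral.integral_interval_sub_left (intf 0 (2*x)) (intf 0 x)

noncomputable def psi (x : ℝ) : ℝ := 3 - 2*x^2 - 4*Real.exp (-3*x^2)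

lemma psi_def : psi = fun x : ℝ => 3 - 2*x^2 - 4*Real.exp (-3*x^2) := rfl

lemma psi_cont : Continuous psi := by rw [psi_def]; fun_prop

lemma hasDerivAt_thresh (x : ℝ) :
    HasDerivAt thresholdFun (Real.exp (-x^2) * psi x) x := by
  have h1 : HasDerivAt (fun y : ℝ => y * Real.exp (-y^2))
      (1 * Real.exp (-x^2) + x * (Real.exp (-x^2) * (-(2*x)))) x := by
    have hp : HasDerivAt (fun y : ℝ => -y^2) (-(2*x)) x := by
      exact (hasDerivAt_pow 2 x).neg.congr_deriv (by simp)
    exact (hasDerivAt_id x).mul hp.exp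
  have hf2 : HasDerivAt (fun y : ℝ => 2*y) 2 x := by
    simpa using (hasDerivAt_id x).const_mul (2:ℝ)
  have h2 : HasDerivAt (fun y : ℝ => Ei (2*y)) (Real.exp (-(2*x)^2) * 2) x := by
    have := (hasDerivAt_Ei (2*x)).comp x hf2
    exact this
  have hfun : thresholdFun = fun y : ℝ => y * Real.exp (-y^2) - 2*(Ei (2*y) - Ei y) := by
    funext y
    rw [threshold_eq y, Ei_diff y]
  rw [hfun]
  have hcomb := h1.sub (((h2.sub (hasDerivAt_Ei x))).const_mul (2:ℝ))
  refine hcomb.congr_deriv ?_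
  have hsplit : Real.exp (-(2*x)^2) = Real.exp (-x^2) * Real.exp (-3*x^2) := by
    rw [← Real.exp_add]; ring_nf
  rw [psi_def, hsplit]
  ring

lemma thresh_cont : Continuous thresholdFun :=
  continuous_iff_continuousAt.mpr fun x => (hasDerivAt_thresh x).continuousAt

lemma hasDerivAt_psi (x : ℝ) :
    HasDerivAt psi (-(4*x) + 24*x*Real.exp (-3*x^2)) x := by
  have h2 : HasDerivAt (fun y : ℝ => 2*y^2) (4*x) x := by
    have := (hasDerivAt_pow 2 x).const_mul (2:ℝ)
    simpa using this.congr_deriv (by ring)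
  have hp : HasDerivAt (fun y : ℝ => -3*y^2) (-6*x) x := by
    have := (hasDerivAt_pow 2 x).const_mul (-3:ℝ)
    simpa using this.congr_deriv (by ring)
  have h3 : HasDerivAt (fun y : ℝ => 4*Real.exp (-3*y^2))
      (4*(Real.exp (-3*x^2) * (-6*x))) x := hp.exp.const_mul 4
  have hcomb := ((hasDerivAt_const x (3:ℝ)).sub h2).sub h3
  rw [psi_def]
  refine hcomb.congr_deriv ?_
  ring
lemma psi_neg_small {x : ℝ} (hx0 : 0 < x) (hx : x ≤ 0.3) : psi x < 0 := by
  show 3 - 2*x^2 - 4*Real.exp (-3*x^2) < 0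
  have h1 : Real.exp (-(0.27:ℝ)) ≤ Real.exp (-3*x^2) := by
    apply Real.exp_le_exp.mpr; nlinarith
  have h2 := F027
  nlinarith [pow_pos hx0 2]

lemma psi_pos_mid {x : ℝ} (hx0 : (0.77:ℝ) ≤ x) (hx : x ≤ 1) : 0 < psi x := by
  show 0 < 3 - 2*x^2 - 4*Real.exp (-3*x^2)
  rcases le_or_gt x 0.8 with h | h
  · have h1 : Real.exp (-3*x^2) ≤ Real.exp (-(1.7787:ℝ)) := by
      apply Real.exp_le_exp.mpr; nlinarith
    have he1 : (2.7182818283:ℝ) ≤ Real.exp (1.7787:ℝ) :=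
      le_trans (le_of_lt Real.exp_one_gt_d9) (Real.exp_le_exp.mpr (by norm_num))
    have h2 : Real.exp (-(1.7787:ℝ)) ≤ 0.3678794412 := by
      rw [Real.exp_neg]
      exact le_trans (inv_anti₀ (by norm_num) he1) (by norm_num)
    nlinarith
  · have h1 : Real.exp (-3*x^2) ≤ Real.exp (-(1.92:ℝ)) := by
      apply Real.exp_le_exp.mpr; nlinarith
    have h2 : Real.exp (-(1.92:ℝ)) < 0.25 := by
      rw [Real.exp_neg]
      exact lt_of_lt_of_le (inv_strictAnti₀ (by norm_num) E192) (by norm_num)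
    nlinarith

lemma psi_mono : StrictMonoOn psi (Set.Icc 0.3 0.77) := by
  apply strictMonoOn_of_deriv_pos (convex_Icc _ _) psi_cont.continuousOn
  intro x hx
  rw [interior_Icc] at hx
  rw [(hasDerivAt_psi x).deriv]
  have hx0 : (0:ℝ) < x := lt_trans (by norm_num) hx.1
  have h1 : Real.exp (-(1.7787:ℝ)) ≤ Real.exp (-3*x^2) := by
    apply Real.exp_le_exp.mpr; nlinarith [hx.2]
  have h2 : (0.1688:ℝ) < Real.exp (-(1.7787:ℝ)) := by
    rw [Real.exp_neg]
    refine lt_of_lt_of_le ?_ (inv_anti₀ (Real.exp_pos _) E17787)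
    norm_num
  have key : 0 < x * (Real.exp (-3*x^2) - 0.1688) := mul_pos hx0 (by linarith)
  nlinarith [key, hx0]

lemma tail_pos {x : ℝ} (hx : 1 ≤ x) : 0 < thresholdFun x := by
  have hx0 : (0:ℝ) < x := lt_of_lt_of_le one_pos hx
  rw [threshold_eq]
  have key : ∀ u ∈ Set.Icc x (2*x), Real.exp (-u^2) ≤ (1/x) * (u * Real.exp (-u^2)) := by
    intro u hu
    rw [one_div, inv_mul_eq_div, le_div_iff₀ hx0]
    nlinarith [(Real.exp_pos (-u^2)).le, hu.1, Real.exp_pos (-u^2)]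
  have hcont2 : IntervalIntegrable (fun u : ℝ => (1/x) * (u * Real.exp (-u^2)))
      MeasureTheory.volume x (2*x) := by
    apply Continuous.intervalIntegrable; fun_prop
  have h2 := intervalIntegral.integral_mono_on (by linarith : x ≤ 2*x)
    (intf x (2*x)) hcont2 key
  have h3 : (∫ u in x..(2*x), (1/x) * (u * Real.exp (-u^2)))
      = (1/x) * ((Real.exp (-x^2) - Real.exp (-(2*x)^2))/2) := by
    rw [intervalIntegral.integral_const_mul]
    congr 1
    have hder : ∀ u ∈ Set.uIcc x (2*x),
        HasDerivAt (fun v : ℝ => -(Real.exp (-v^2)/2)) (u * Real.exp (-u^2)) u := by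
      intro u _
      have hp : HasDerivAt (fun v : ℝ => -v^2) (-(2*u)) u := by
        exact (hasDerivAt_pow 2 u).neg.congr_deriv (by simp)
      have := (hp.exp.div_const 2).neg
      refine this.congr_deriv ?_
      ring
    rw [intervalIntegral.integral_eq_sub_of_hasDerivAt hder
      (by apply Continuous.intervalIntegrable; fun_prop)]
    ring
  rw [h3] at h2
  have hx2 : (1:ℝ) ≤ x^2 := by nlinarith
  have h5 : (1/x) * ((Real.exp (-x^2) - Real.exp (-(2*x)^2))/2) * 2 < x * Real.exp (-x^2) := by
    rw [one_div, inv_mul_eq_div, div_mul_eq_mul_div, div_lt_iff₀ hx0]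
    nlinarith [Real.exp_pos (-(2*x)^2), Real.exp_pos (-x^2)]
  linarith

lemma N1 : thresholdFun 0.78 < 0 := by
  rw [threshold_eq, show (2*(0.78:ℝ)) = 1.56 by norm_num]
  have e1 := intervalIntegral.integral_add_adjacent_intervals (intf 0.78 0.975) (intf 0.975 1.56)
  have e2 := intervalIntegral.integral_add_adjacent_intervals (intf 0.975 1.17) (intf 1.17 1.56)
  have e3 := intervalIntegral.integral_add_adjacent_intervals (intf 1.17 1.365) (intf 1.365 1.56)
  have p1 := piece_lb 0.78 0.975 0.8775 0.4630101 (by norm_num)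
    (by rw [show -(0.8775:ℝ)^2 = -0.77000625 by norm_num]; exact F77) (by norm_num)
  have p2 := piece_lb 0.975 1.17 1.0725 0.3165556 (by norm_num)
    (by rw [show -(1.0725:ℝ)^2 = -1.15025625 by norm_num]; exact F115) (by norm_num)
  have p3 := piece_lb 1.17 1.365 1.2675 0.2005771 (by norm_num)
    (by rw [show -(1.2675:ℝ)^2 = -1.60655625 by norm_num]; exact F160) (by norm_num)
  have p4 := piece_lb 1.365 1.56 1.4625 0.1177835 (by norm_num)
    (by rw [show -(1.4625:ℝ)^2 = -2.13890625 by norm_num]; exact F213) (by norm_num)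
  have hterm : (0.78:ℝ) * Real.exp (-(0.78:ℝ)^2) ≤ 0.78 * 0.5442211 := by
    rw [show -(0.78:ℝ)^2 = -0.6084 by norm_num]
    nlinarith [E6084]
  have hnum : (0.78:ℝ) * 0.5442211 <
      2 * (0.4630101 * ((1+(0.8775:ℝ)^2)*(0.975-0.78) - ((0.975:ℝ)^3-(0.78:ℝ)^3)/3)
        + 0.3165556 * ((1+(1.0725:ℝ)^2)*(1.17-0.975) - ((1.17:ℝ)^3-(0.975:ℝ)^3)/3)
        + 0.2005771 * ((1+(1.2675:ℝ)^2)*(1.365-1.17) - ((1.365:ℝ)^3-(1.17:ℝ)^3)/3)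
        + 0.1177835 * ((1+(1.4625:ℝ)^2)*(1.56-1.365) - ((1.56:ℝ)^3-(1.365:ℝ)^3)/3)) := by
    norm_num
  linarith

lemma N2 : 0 < thresholdFun 0.80 := by
  rw [threshold_eq, show (2*(0.80:ℝ)) = 1.6 by norm_num]
  have e1 := intervalIntegral.integral_add_adjacent_intervals (intf 0.80 1) (intf 1 1.6)
  have e2 := intervalIntegral.integral_add_adjacent_intervals (intf 1 1.2) (intf 1.2 1.6)
  have e3 := intervalIntegral.integral_add_adjacent_intervals (intf 1.2 1.4) (intf 1.4 1.6)
  have p1 := piece_ub 0.80 1 0.9 0.4448581 (by norm_num) (by norm_num) (by norm_num) (by norm_num)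
    (by rw [show -(0.9:ℝ)^2 = -0.81 by norm_num]; exact E081) (by norm_num)
  have p2 := piece_ub 1 1.2 1.1 0.2981974 (by norm_num) (by norm_num) (by norm_num) (by norm_num)
    (by rw [show -(1.1:ℝ)^2 = -1.21 by norm_num]; exact E121) (by norm_num)
  have p3 := piece_ub 1.2 1.4 1.3 0.1845198 (by norm_num) (by norm_num) (by norm_num) (by norm_num)
    (by rw [show -(1.3:ℝ)^2 = -1.69 by norm_num]; exact E169) (by norm_num)
  have p4 := piece_ub 1.4 1.6 1.5 0.1054002 (by norm_num) (by norm_num) (by norm_num) (by norm_num)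
    (by rw [show -(1.5:ℝ)^2 = -2.25 by norm_num]; exact E225) (by norm_num)
  have hterm : (0.80:ℝ) * 0.5272923 ≤ 0.80 * Real.exp (-(0.80:ℝ)^2) := by
    rw [show -(0.80:ℝ)^2 = -0.64 by norm_num]
    nlinarith [F064]
  have hnum : 2 * (0.4448581 * ((1+(0.9:ℝ)^2+(3/4)*(0.9:ℝ)^4)*(1-0.80)
          - (1+(3/2)*(0.9:ℝ)^2)*((1:ℝ)^3-(0.80:ℝ)^3)/3 + (3/20)*((1:ℝ)^5-(0.80:ℝ)^5))
        + 0.2981974 * ((1+(1.1:ℝ)^2+(3/4)*(1.1:ℝ)^4)*(1.2-1)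
          - (1+(3/2)*(1.1:ℝ)^2)*((1.2:ℝ)^3-(1:ℝ)^3)/3 + (3/20)*((1.2:ℝ)^5-(1:ℝ)^5))
        + 0.1845198 * ((1+(1.3:ℝ)^2+(3/4)*(1.3:ℝ)^4)*(1.4-1.2)
          - (1+(3/2)*(1.3:ℝ)^2)*((1.4:ℝ)^3-(1.2:ℝ)^3)/3 + (3/20)*((1.4:ℝ)^5-(1.2:ℝ)^5))
        + 0.1054002 * ((1+(1.5:ℝ)^2+(3/4)*(1.5:ℝ)^4)*(1.6-1.4)
          - (1+(3/2)*(1.5:ℝ)^2)*((1.6:ℝ)^3-(1.4:ℝ)^3)/3 + (3/20)*((1.6:ℝ)^5-(1.4:ℝ)^5)))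
      < (0.80:ℝ) * 0.5272923 := by
    norm_num
  linarith
end ThreshAux

open ThreshAux in
/-- g has a unique positive root λ, and λ ∈ (0.78, 0.80) (λ ≈ 0.789004). -/
theorem thresholdFun_unique_root :
    (∃! x : ℝ, 0 < x ∧ thresholdFun x = 0) ∧
    ∀ x : ℝ, 0 < x → thresholdFun x = 0 → 0.78 < x ∧ x < 0.80 := by
  obtain ⟨a, ha, hpsia⟩ : ∃ a ∈ Set.Ioo (0.3:ℝ) 0.77, psi a = 0 := by
    have h0 : (0:ℝ) ∈ Set.Ioo (psi 0.3) (psi 0.77) :=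
      ⟨psi_neg_small (by norm_num) (by norm_num), psi_pos_mid (by norm_num) (by norm_num)⟩
    obtain ⟨a, ha, h⟩ := intermediate_value_Ioo (by norm_num : (0.3:ℝ) ≤ 0.77)
      psi_cont.continuousOn h0
    exact ⟨a, ha, h⟩
  have g0 : thresholdFun 0 = 0 := by
    rw [threshold_eq, show (2*(0:ℝ)) = 0 by norm_num]
    simp
  have gAnti : StrictAntiOn thresholdFun (Set.Icc 0 a) := by
    apply strictAntiOn_of_deriv_neg (convex_Icc _ _) thresh_cont.continuousOn
    intro x hx
    rw [interior_Icc] at hx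
    rw [(hasDerivAt_thresh x).deriv]
    have hx0 := hx.1
    have hpsix : psi x < 0 := by
      rcases le_or_gt x 0.3 with h | h
      · exact psi_neg_small hx0 h
      · have := psi_mono ⟨h.le, by linarith [ha.2, hx.2]⟩ ⟨ha.1.le, ha.2.le⟩ hx.2
        rwa [hpsia] at this
    nlinarith [Real.exp_pos (-x^2)]
  have gMono : StrictMonoOn thresholdFun (Set.Icc a 1) := by
    apply strictMonoOn_of_deriv_pos (convex_Icc _ _) thresh_cont.continuousOn
    intro x hx
    rw [interior_Icc] at hx
    rw [(hasDerivAt_thresh x).deriv]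
    have hpsix : 0 < psi x := by
      rcases le_or_gt x 0.77 with h | h
      · have := psi_mono ⟨ha.1.le, ha.2.le⟩ ⟨by linarith [ha.1, hx.1], h⟩ hx.1
        rwa [hpsia] at this
      · exact psi_pos_mid h.le hx.2.le
    nlinarith [Real.exp_pos (-x^2)]
  have ha078 : a ≤ 0.78 := by linarith [ha.2]
  have hneg : ∀ x : ℝ, 0 < x → x ≤ 0.78 → thresholdFun x < 0 := by
    intro x hx0 hx
    rcases le_or_gt x a with h | h
    · calc thresholdFun x < thresholdFun 0 := gAnti ⟨le_refl _, by linarith [ha.1]⟩ ⟨hx0.le, h⟩ hx0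
        _ = 0 := g0
    · have hle : thresholdFun x ≤ thresholdFun 0.78 := by
        rcases eq_or_lt_of_le hx with he | hlt
        · rw [he]
        · exact (gMono ⟨h.le, by linarith⟩ ⟨ha078, by norm_num⟩ hlt).le
      linarith [N1]
  have hpos : ∀ x : ℝ, (0.80:ℝ) ≤ x → 0 < thresholdFun x := by
    intro x hx
    rcases le_or_gt 1 x with h | h
    · exact tail_pos h
    · have hle : thresholdFun 0.80 ≤ thresholdFun x := by
        rcases eq_or_lt_of_le hx with he | hlt
        · rw [← he]
        · exact (gMono ⟨by linarith [ha.2], by norm_num⟩ ⟨by linarith [ha.2], h.le⟩ hlt).le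
      linarith [N2]
  obtain ⟨c, hc, hgc⟩ : ∃ c ∈ Set.Ioo (0.78:ℝ) 0.80, thresholdFun c = 0 := by
    have h0 : (0:ℝ) ∈ Set.Ioo (thresholdFun 0.78) (thresholdFun 0.80) := ⟨N1, N2⟩
    obtain ⟨c, hc, h⟩ := intermediate_value_Ioo (by norm_num : (0.78:ℝ) ≤ 0.80)
      thresh_cont.continuousOn h0
    exact ⟨c, hc, h⟩
  have range : ∀ x : ℝ, 0 < x → thresholdFun x = 0 → 0.78 < x ∧ x < 0.80 := by
    intro x hx0 hgx
    constructor
    · by_contra h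
      push_neg at h
      exact absurd hgx (ne_of_lt (hneg x hx0 h))
    · by_contra h
      push_neg at h
      exact absurd hgx.symm (ne_of_lt (hpos x h))
  refine ⟨⟨c, ⟨by linarith [hc.1], hgc⟩, ?_⟩, range⟩
  rintro y ⟨hy0, hgy⟩
  have hyr := range y hy0 hgy
  apply gMono.injOn ⟨by linarith [ha.2, hyr.1], by linarith [hyr.2]⟩
    ⟨by linarith [ha.2, hc.1], by linarith [hc.2]⟩
  rw [hgy, hgc]
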